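/- Let G be an infinite, locally finite, connected undirected quasi-transitive graph. Then μ = μ^B, i.e., the connective constant equals the exponential growth rate of the number of backward extendable self-avoiding walks. -/

import Mathlib

open Filter ENNReal

structure Dgraph where
  V : Type
  E : Type
  src : E → V
  tgt : E → V

namespace Dgraph

variable (G : Dgraph)

/-- Every vertex has finite in-degree and out-degree. -/
def LocallyFinite : Prop :=
  ∀ v : G.V, {e : G.E | G.src e = v}.Finite ∧ {e : G.E | G.tgt e = v}.Finite

/-- There is a directed edge from `u` to `v`. -/
def Adj (u v : G.V) : Prop := ∃ e : G.E, G.src e = u ∧ G.tgt e = v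

/-- Directed walks exist between any ordered pair of vertices. -/
def StronglyConnected : Prop := ∀ u v : G.V, Relation.ReflTransGen G.Adj u v

/-- An automorphism of a directed multigraph. -/
structure Aut where
  vmap : G.V ≃ G.V
  emap : G.E ≃ G.E
  src_eq : ∀ e, G.src (emap e) = vmap (G.src e)
  tgt_eq : ∀ e, G.tgt (emap e) = vmap (G.tgt e)

/-- `u` and `v` are in the same transitivity class. -/
def SameOrbit (u v : G.V) : Prop := ∃ φ : G.Aut, φ.vmap u = v

/-- Finitely many transitivity classes. -/
def QuasiTransitive : Prop := ∃ S : Finset G.V, ∀ v : G.V, ∃ s ∈ S, G.SameOrbit s v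

def VertexTransitive : Prop := ∀ u v : G.V, G.SameOrbit u v

/-- The orbit of `v` under the stabiliser of `u`. -/
def stabOrbit (u v : G.V) : Set G.V := {w | ∃ φ : G.Aut, φ.vmap u = u ∧ φ.vmap v = w}

/-- Unimodularity: the weight function is constant on transitivity classes,
equivalently `|stab(u)v| = |stab(v)u|` whenever `u, v` are in the same orbit. -/
def Unimodular : Prop := ∀ u v : G.V, G.SameOrbit u v →
  Nat.card (G.stabOrbit u v) = Nat.card (G.stabOrbit v u)

/-- The edge-reversal of `G`. -/
def rev : Dgraph := ⟨G.V, G.E, G.tgt, G.src⟩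

/-- Each edge has a reverse edge: `G` represents an undirected graph. -/
def Undirected : Prop := ∃ ι : G.E ≃ G.E, ∀ e : G.E,
  G.src (ι e) = G.tgt e ∧ G.tgt (ι e) = G.src e ∧ ι (ι e) = e

/-- An `n`-step self-avoiding walk starting at `v`, directed away from `v`. -/
@[ext]
structure SAW (n : ℕ) (v : G.V) where
  vs : Fin (n + 1) → G.V
  es : Fin n → G.E
  hsrc : ∀ i : Fin n, G.src (es i) = vs i.castSucc
  htgt : ∀ i : Fin n, G.tgt (es i) = vs i.succ
  hstart : vs 0 = v
  hinj : Function.Injective vs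

/-- `w` is an initial segment of a singly infinite SAW from `v`. -/
def IsFwdExt {n : ℕ} {v : G.V} (w : G.SAW n v) : Prop :=
  ∃ (vs : ℕ → G.V) (es : ℕ → G.E), Function.Injective vs ∧
    (∀ i : ℕ, G.src (es i) = vs i ∧ G.tgt (es i) = vs (i + 1)) ∧
    (∀ i : Fin (n + 1), vs i = w.vs i) ∧ (∀ i : Fin n, es i = w.es i)

/-- `w` is the final segment of a singly infinite SAW from infinity ending at the
endpoint of `w` (indexed backwards from the endpoint). -/
def IsBwdExt {n : ℕ} {v : G.V} (w : G.SAW n v) : Prop :=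
  ∃ (vs : ℕ → G.V) (es : ℕ → G.E), Function.Injective vs ∧
    (∀ i : ℕ, G.src (es i) = vs (i + 1) ∧ G.tgt (es i) = vs i) ∧
    (∀ i : Fin (n + 1), vs (n - (i : ℕ)) = w.vs i) ∧
    (∀ i : Fin n, es (n - 1 - (i : ℕ)) = w.es i)

/-- `w` is a sub-walk of a doubly infinite SAW. -/
def IsDblExt {n : ℕ} {v : G.V} (w : G.SAW n v) : Prop :=
  ∃ (vs : ℤ → G.V) (es : ℤ → G.E), Function.Injective vs ∧
    (∀ i : ℤ, G.src (es i) = vs i ∧ G.tgt (es i) = vs (i + 1)) ∧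
    ∃ k : ℤ, (∀ i : Fin (n + 1), vs (k + (i : ℕ)) = w.vs i) ∧
      (∀ i : Fin n, es (k + (i : ℕ)) = w.es i)

noncomputable def sigma (n : ℕ) (v : G.V) : ℕ := Nat.card (G.SAW n v)
noncomputable def sigmaF (n : ℕ) (v : G.V) : ℕ := Nat.card {w : G.SAW n v // G.IsFwdExt w}
noncomputable def sigmaB (n : ℕ) (v : G.V) : ℕ := Nat.card {w : G.SAW n v // G.IsBwdExt w}
noncomputable def sigmaFB (n : ℕ) (v : G.V) : ℕ := Nat.card {w : G.SAW n v // G.IsDblExt w}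

noncomputable def ssigma (n : ℕ) : ℝ≥0∞ := ⨆ v : G.V, (G.sigma n v : ℝ≥0∞)
noncomputable def ssigmaF (n : ℕ) : ℝ≥0∞ := ⨆ v : G.V, (G.sigmaF n v : ℝ≥0∞)
noncomputable def ssigmaB (n : ℕ) : ℝ≥0∞ := ⨆ v : G.V, (G.sigmaB n v : ℝ≥0∞)
noncomputable def ssigmaFB (n : ℕ) : ℝ≥0∞ := ⨆ v : G.V, (G.sigmaFB n v : ℝ≥0∞)

/-- Undirected graph distance: length of a shortest path ignoring orientations. -/
noncomputable def udist (u v : G.V) : ℕ :=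
  sInf {n : ℕ | ∃ f : Fin (n + 1) → G.V, f 0 = u ∧ f (Fin.last n) = v ∧
    ∀ i : Fin n, (∃ e, G.src e = f i.castSucc ∧ G.tgt e = f i.succ) ∨
      (∃ e, G.src e = f i.succ ∧ G.tgt e = f i.castSucc)}

end Dgraph

open Filter ENNReal

attribute [local instance] Classical.propDecidable


/-! ### Auxiliary counting lemmas -/

section Counting

lemma aux_card_eq_sum_fibers {α ι : Type*} [Finite α] [Fintype ι] (g : α → ι) :
    Nat.card α = ∑ i, Nat.card {a : α // g a = i} := by
  classical
  have := Fintype.ofFinite α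
  rw [Nat.card_eq_fintype_card, ← Fintype.card_congr (Equiv.sigmaFiberEquiv g),
    Fintype.card_sigma]
  simp [Nat.card_eq_fintype_card]

lemma aux_card_le_sum_fibers {α ι : Type*} [Finite α] [Fintype ι] (g : α → ι) (c : ι → ℝ≥0∞)
    (h : ∀ i, (Nat.card {a : α // g a = i} : ℝ≥0∞) ≤ c i) :
    (Nat.card α : ℝ≥0∞) ≤ ∑ i, c i := by
  rw [aux_card_eq_sum_fibers g, Nat.cast_sum]
  exact Finset.sum_le_sum fun i _ => h i

lemma aux_card_le_mul_fibers {α β : Type*} [Finite α] [Finite β] (g : α → β) (c : ℝ≥0∞)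
    (h : ∀ b : β, (Nat.card {a : α // g a = b} : ℝ≥0∞) ≤ c) :
    (Nat.card α : ℝ≥0∞) ≤ (Nat.card β : ℝ≥0∞) * c := by
  have := Fintype.ofFinite β
  calc (Nat.card α : ℝ≥0∞) ≤ ∑ _b : β, c := aux_card_le_sum_fibers g _ h
    _ = (Nat.card β : ℝ≥0∞) * c := by
        rw [Finset.sum_const, Nat.card_eq_fintype_card]
        simp [mul_comm, Finset.card_univ]

lemma aux_card_le_of_injective {α β : Type*} [Finite β] (f : α → β)
    (hf : Function.Injective f) : Nat.card α ≤ Nat.card β :=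
  Nat.card_le_card_of_injective f hf

end Counting

namespace Dgraph

variable (G : Dgraph)

/-! ### Edge flipping -/

noncomputable def flipE (hund : G.Undirected) (e : G.E) : G.E := hund.choose e

lemma flipE_src (hund : G.Undirected) (e : G.E) : G.src (G.flipE hund e) = G.tgt e :=
  (hund.choose_spec e).1

lemma flipE_tgt (hund : G.Undirected) (e : G.E) : G.tgt (G.flipE hund e) = G.src e :=
  (hund.choose_spec e).2.1

lemma flipE_flipE (hund : G.Undirected) (e : G.E) : G.flipE hund (G.flipE hund e) = e :=
  (hund.choose_spec e).2.2

/-! ### Undirected steps, walks, distance -/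

def UStep (u w : G.V) : Prop :=
  (∃ e, G.src e = u ∧ G.tgt e = w) ∨ (∃ e, G.src e = w ∧ G.tgt e = u)

lemma UStep.symm {G : Dgraph} {u w : G.V} (h : G.UStep u w) : G.UStep w u := h.elim Or.inr Or.inl

lemma UStep.exists_fwd {G : Dgraph} (hund : G.Undirected) {u w : G.V} (h : G.UStep u w) :
    ∃ e, G.src e = u ∧ G.tgt e = w := by
  rcases h with h | ⟨e, he1, he2⟩
  · exact h
  · exact ⟨G.flipE hund e, by rw [G.flipE_src hund, he2], by rw [G.flipE_tgt hund, he1]⟩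

def NWalk (u w : G.V) (n : ℕ) : Prop :=
  ∃ g : ℕ → G.V, g 0 = u ∧ g n = w ∧ ∀ i < n, G.UStep (g i) (g (i + 1))

lemma ustep_congr {G : Dgraph} {a a' b b' : G.V} (ha : a = a') (hb : b = b')
    (h : G.UStep a b) : G.UStep a' b' := ha ▸ hb ▸ h

lemma udist_eq_sInf (u w : G.V) : G.udist u w = sInf {n : ℕ | G.NWalk u w n} := by
  unfold udist
  congr 1
  ext n
  constructor
  · rintro ⟨f, hf0, hfl, hstep⟩
    refine ⟨fun i => f ⟨min i n, by omega⟩, by simpa using hf0, by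
      simpa [Fin.last] using hfl, fun i hi => ?_⟩
    have e1 : f (⟨i, hi⟩ : Fin n).castSucc = f ⟨min i n, by omega⟩ := by
      apply congrArg f; apply Fin.ext; simp only [Fin.coe_castSucc]; omega
    have e2 : f (⟨i, hi⟩ : Fin n).succ = f ⟨min (i + 1) n, by omega⟩ := by
      apply congrArg f; apply Fin.ext; simp only [Fin.val_succ]; omega
    exact ustep_congr e1 e2 (hstep ⟨i, hi⟩)
  · rintro ⟨g, hg0, hgl, hstep⟩
    exact ⟨fun i => g i.val, by simpa using hg0, by simpa [Fin.last] using hgl,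
      fun i => hstep i.val i.isLt⟩

lemma NWalk.udist_le {G : Dgraph} {u w : G.V} {n : ℕ} (h : G.NWalk u w n) : G.udist u w ≤ n := by
  rw [udist_eq_sInf]; exact Nat.sInf_le h

lemma nwalk_refl (u : G.V) : G.NWalk u u 0 := ⟨fun _ => u, rfl, rfl, by omega⟩

lemma nwalk_one {G : Dgraph} {u w : G.V} (h : G.UStep u w) : G.NWalk u w 1 :=
  ⟨fun i => if i = 0 then u else w, by simp, by simp, by
    intro i hi
    have : i = 0 := by omega
    subst this
    simpa using h⟩

lemma NWalk.concat {G : Dgraph} {u x w : G.V} {m n : ℕ} (h1 : G.NWalk u x m)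
    (h2 : G.NWalk x w n) : G.NWalk u w (m + n) := by
  obtain ⟨g1, hg10, hg1l, hs1⟩ := h1
  obtain ⟨g2, hg20, hg2l, hs2⟩ := h2
  refine ⟨fun i => if i ≤ m then g1 i else g2 (i - m), by simp [hg10], ?_, ?_⟩
  · by_cases hn : n = 0
    · subst hn; simp [hg1l, ← hg20, hg2l]
    · have h' : ¬ (m + n ≤ m) := by omega
      simp only [h', if_false]
      rw [show m + n - m = n by omega, hg2l]
  · intro i hi
    show G.UStep (if i ≤ m then g1 i else g2 (i - m))
      (if i + 1 ≤ m then g1 (i + 1) else g2 (i + 1 - m))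
    by_cases h : i + 1 ≤ m
    · have h' : i ≤ m := by omega
      simpa [h, h'] using hs1 i (by omega)
    · have key : ∀ j, m ≤ j → (if j ≤ m then g1 j else g2 (j - m)) = g2 (j - m) := by
        intro j hj
        by_cases hjm : j ≤ m
        · have : j = m := le_antisymm hjm hj
          simp [this, hg1l, hg20]
        · simp [hjm]
      rw [key i (by omega), key (i + 1) (by omega), show i + 1 - m = i - m + 1 by omega]
      exact hs2 (i - m) (by omega)

lemma nwalk_exists (hsc : G.StronglyConnected) (u w : G.V) : ∃ n, G.NWalk u w n := by
  have h := hsc u w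
  induction h with
  | refl => exact ⟨0, G.nwalk_refl u⟩
  | tail _ hadj ih =>
    obtain ⟨n, hn⟩ := ih
    obtain ⟨e, he1, he2⟩ := hadj
    exact ⟨n + 1, hn.concat (nwalk_one (Or.inl ⟨e, he1, he2⟩))⟩

lemma nwalk_udist (hsc : G.StronglyConnected) (u w : G.V) : G.NWalk u w (G.udist u w) := by
  rw [udist_eq_sInf]
  exact Nat.sInf_mem (G.nwalk_exists hsc u w)

lemma udist_self (u : G.V) : G.udist u u = 0 :=
  Nat.le_zero.mp (G.nwalk_refl u).udist_le

lemma udist_eq_zero {G : Dgraph} (hsc : G.StronglyConnected) {u w : G.V}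
    (h : G.udist u w = 0) : u = w := by
  have := G.nwalk_udist hsc u w
  rw [h] at this
  obtain ⟨g, h0, hl, _⟩ := this
  rw [← h0, hl]

lemma udist_triangle (hsc : G.StronglyConnected) (u x w : G.V) :
    G.udist u w ≤ G.udist u x + G.udist x w :=
  ((G.nwalk_udist hsc u x).concat (G.nwalk_udist hsc x w)).udist_le

lemma udist_le_one {G : Dgraph} {u w : G.V} (h : G.UStep u w) :
    G.udist u w ≤ 1 := (nwalk_one h).udist_le

/-- Neighbours are finite. -/
lemma nbr_finite (hlf : G.LocallyFinite) (u : G.V) : {x | G.UStep u x}.Finite := by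
  have h1 : {x | G.UStep u x} ⊆ (G.tgt '' {e | G.src e = u}) ∪ (G.src '' {e | G.tgt e = u}) := by
    rintro x (⟨e, he1, he2⟩ | ⟨e, he1, he2⟩)
    · exact Or.inl ⟨e, he1, he2⟩
    · exact Or.inr ⟨e, he2, he1⟩
  exact (((hlf u).1.image _).union ((hlf u).2.image _)).subset h1

/-! ### Geodesic rays -/

def goodAt (v u : G.V) : Prop :=
  {w : G.V | G.udist v w = G.udist v u + G.udist u w}.Infinite

lemma goodAt_self (hinf : Infinite G.V) (v : G.V) : G.goodAt v v := by
  have h : {w : G.V | G.udist v w = G.udist v v + G.udist v w} = Set.univ := by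
    ext w; simp [G.udist_self]
  rw [goodAt, h]
  exact Set.infinite_univ

lemma good_step (hlf : G.LocallyFinite) (hsc : G.StronglyConnected) (v u : G.V)
    (h : G.goodAt v u) :
    ∃ u', G.UStep u u' ∧ G.udist v u' = G.udist v u + 1 ∧ G.goodAt v u' := by
  classical
  set T : Set G.V := {w : G.V | G.udist v w = G.udist v u + G.udist u w} \ {u} with hT
  have hTinf : T.Infinite := h.diff (Set.finite_singleton u)
  have claim : ∀ w ∈ T, ∃ x, G.UStep u x ∧ G.udist v x = G.udist v u + 1 ∧
      G.udist v w = G.udist v x + G.udist x w := by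
    rintro w ⟨hw1, hw2⟩
    have hw1 : G.udist v w = G.udist v u + G.udist u w := hw1
    have hd1 : 1 ≤ G.udist u w := by
      rcases Nat.eq_zero_or_pos (G.udist u w) with h0 | h0
      · exact absurd (udist_eq_zero hsc h0) (by simpa [eq_comm] using hw2)
      · exact h0
    obtain ⟨g, hg0, hgl, hgs⟩ := G.nwalk_udist hsc u w
    have hstep01 : G.UStep u (g 1) := by simpa [hg0] using hgs 0 (by omega)
    refine ⟨g 1, hstep01, ?_⟩
    have hB : G.udist (g 1) w ≤ G.udist u w - 1 := by
      refine NWalk.udist_le ⟨fun i => g (i + 1), rfl, ?_, fun i hi => hgs (i + 1) (by omega)⟩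
      show g (G.udist u w - 1 + 1) = w
      rw [show G.udist u w - 1 + 1 = G.udist u w by omega, hgl]
    have hC : G.udist u w ≤ 1 + G.udist (g 1) w := by
      have h1 := G.udist_triangle hsc u (g 1) w
      have h2 := udist_le_one hstep01
      omega
    have hD : G.udist v (g 1) ≤ G.udist v u + 1 := by
      have h1 := G.udist_triangle hsc v u (g 1)
      have h2 := udist_le_one hstep01
      omega
    have hE : G.udist v w ≤ G.udist v (g 1) + G.udist (g 1) w := G.udist_triangle hsc _ _ _
    omega
  haveI : Finite ↥{x | G.UStep u x} := (G.nbr_finite hlf u).to_subtype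
  haveI : Infinite ↥T := hTinf.to_subtype
  let F : ↥T → ↥{x | G.UStep u x} := fun w =>
    ⟨Classical.choose (claim w.val w.property), (Classical.choose_spec (claim w.val w.property)).1⟩
  obtain ⟨y, hy⟩ := Finite.exists_infinite_fiber F
  have hyspec : ∀ z : ↥T, F z = y →
      G.udist v y.val = G.udist v u + 1 ∧
      G.udist v z.val = G.udist v y.val + G.udist y.val z.val := by
    intro z hz
    have h1 := (Classical.choose_spec (claim z.val z.property)).2
    have h2 : Classical.choose (claim z.val z.property) = y.val := congrArg Subtype.val hz
    rw [h2] at h1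
    exact ⟨h1.1, h1.2⟩
  haveI := hy
  obtain ⟨z0⟩ : Nonempty ↥(F ⁻¹' {y}) := inferInstance
  refine ⟨y.val, y.property, (hyspec z0.val z0.property).1, ?_⟩
  refine Set.infinite_of_injective_forall_mem
    (f := fun z : ↥(F ⁻¹' {y}) => (z.val.val : G.V)) ?_ ?_
  · intro a b hab
    exact Subtype.ext (Subtype.ext hab)
  · intro z
    exact (hyspec z.val z.property).2

lemma exists_geodesic_ray (hinf : Infinite G.V) (hlf : G.LocallyFinite)
    (hsc : G.StronglyConnected) (v : G.V) :
    ∃ r : ℕ → G.V, r 0 = v ∧ (∀ k, G.udist v (r k) = k) ∧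
      (∀ k, G.UStep (r k) (r (k + 1))) := by
  have step : ∀ u : {u : G.V // G.goodAt v u}, ∃ u' : {u : G.V // G.goodAt v u},
      G.UStep u.val u'.val ∧ G.udist v u'.val = G.udist v u.val + 1 := by
    intro u
    obtain ⟨u', h1, h2, h3⟩ := G.good_step hlf hsc v u.val u.property
    exact ⟨⟨u', h3⟩, h1, h2⟩
  choose f hf1 hf2 using step
  set r' : ℕ → {u : G.V // G.goodAt v u} := fun k => f^[k] ⟨v, G.goodAt_self hinf v⟩ with hr'
  have hit : ∀ k, r' (k + 1) = f (r' k) := fun k => Function.iterate_succ_apply' f k _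
  refine ⟨fun k => (r' k).val, rfl, ?_, ?_⟩
  · intro k
    induction k with
    | zero => exact G.udist_self v
    | succ k ih =>
      have ih' : G.udist v (r' k).val = k := ih
      show G.udist v (r' (k + 1)).val = k + 1
      rw [hit k, hf2, ih']
  · intro k
    show G.UStep (r' k).val (r' (k + 1)).val
    rw [hit k]
    exact hf1 (r' k)

/-! ### SAW operations -/

lemma SAW.congr_vs {G : Dgraph} {n : ℕ} {v : G.V} (w : G.SAW n v) {i j : Fin (n + 1)}
    (h : i.val = j.val) : w.vs i = w.vs j := congrArg w.vs (Fin.ext h)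

lemma SAW.congr_es {G : Dgraph} {n : ℕ} {v : G.V} (w : G.SAW n v) {i j : Fin n}
    (h : i.val = j.val) : w.es i = w.es j := congrArg w.es (Fin.ext h)

lemma saw_eq {G : Dgraph} {n : ℕ} {v : G.V} {w w' : G.SAW n v}
    (hvs : ∀ i, w.vs i = w'.vs i) (hes : ∀ i, w.es i = w'.es i) : w = w' :=
  SAW.ext (funext hvs) (funext hes)

/-- Rebase a SAW along an equality of starting vertices. -/
def SAW.reb {G : Dgraph} {n : ℕ} {u u' : G.V} (w : G.SAW n u) (h : u = u') : G.SAW n u' :=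
  ⟨w.vs, w.es, w.hsrc, w.htgt, w.hstart.trans h, w.hinj⟩

@[simp] lemma SAW.reb_vs {G : Dgraph} {n : ℕ} {u u' : G.V} (w : G.SAW n u) (h : u = u') :
    (w.reb h).vs = w.vs := rfl

@[simp] lemma SAW.reb_es {G : Dgraph} {n : ℕ} {u u' : G.V} (w : G.SAW n u) (h : u = u') :
    (w.reb h).es = w.es := rfl

/-- The sub-SAW of `w` from position `a` to position `a + len`. -/
def SAW.sub {G : Dgraph} {n : ℕ} {v : G.V} (w : G.SAW n v) (a len : ℕ) (h : a + len ≤ n) :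
    G.SAW len (w.vs ⟨a, by omega⟩) :=
  { vs := fun i => w.vs ⟨a + i.val, by omega⟩
    es := fun i => w.es ⟨a + i.val, by omega⟩
    hsrc := fun i => by
      have h1 := w.hsrc ⟨a + i.val, by omega⟩
      exact h1.trans (w.congr_vs (by simp))
    htgt := fun i => by
      have h1 := w.htgt ⟨a + i.val, by omega⟩
      exact h1.trans (w.congr_vs (by simp [Fin.val_succ]; omega))
    hstart := w.congr_vs (by simp)
    hinj := fun i j hij => by
      have h2 := w.hinj hij
      rw [Fin.mk.injEq] at h2
      exact Fin.ext (by omega) }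

lemma SAW.sub_vs {G : Dgraph} {n : ℕ} {v : G.V} (w : G.SAW n v) {a len : ℕ} (h : a + len ≤ n)
    (i : Fin (len + 1)) (h2 : a + i.val < n + 1) :
    (w.sub a len h).vs i = w.vs ⟨a + i.val, h2⟩ := rfl

lemma SAW.sub_es {G : Dgraph} {n : ℕ} {v : G.V} (w : G.SAW n v) {a len : ℕ} (h : a + len ≤ n)
    (i : Fin len) (h2 : a + i.val < n) :
    (w.sub a len h).es i = w.es ⟨a + i.val, h2⟩ := rfl

/-- The reversal of the first `k` steps of `w`, as a SAW from `w.vs k`. -/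
noncomputable def SAW.revTake {G : Dgraph} (hund : G.Undirected) {n : ℕ} {v : G.V}
    (w : G.SAW n v) (k : ℕ) (hk : k ≤ n) : G.SAW k (w.vs ⟨k, by omega⟩) :=
  { vs := fun i => w.vs ⟨k - i.val, by omega⟩
    es := fun i => G.flipE hund (w.es ⟨k - 1 - i.val, by omega⟩)
    hsrc := fun i => by
      have hi := i.isLt
      have h1 := (G.flipE_src hund (w.es ⟨k - 1 - i.val, by omega⟩)).trans
        (w.htgt ⟨k - 1 - i.val, by omega⟩)
      exact h1.trans (w.congr_vs (by simp [Fin.val_succ]; omega))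
    htgt := fun i => by
      have hi := i.isLt
      have h1 := (G.flipE_tgt hund (w.es ⟨k - 1 - i.val, by omega⟩)).trans
        (w.hsrc ⟨k - 1 - i.val, by omega⟩)
      exact h1.trans (w.congr_vs (by simp [Fin.val_succ]; omega))
    hstart := w.congr_vs (by simp)
    hinj := fun i j hij => by
      have hi := i.isLt
      have hj := j.isLt
      have h2 := w.hinj hij
      rw [Fin.mk.injEq] at h2
      exact Fin.ext (by omega) }

lemma SAW.revTake_vs {G : Dgraph} (hund : G.Undirected) {n : ℕ} {v : G.V} (w : G.SAW n v)
    {k : ℕ} (hk : k ≤ n) (i : Fin (k + 1)) (h2 : k - i.val < n + 1) :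
    (w.revTake hund k hk).vs i = w.vs ⟨k - i.val, h2⟩ := rfl

lemma SAW.revTake_es {G : Dgraph} (hund : G.Undirected) {n : ℕ} {v : G.V} (w : G.SAW n v)
    {k : ℕ} (hk : k ≤ n) (i : Fin k) (h2 : k - 1 - i.val < n) :
    (w.revTake hund k hk).es i = G.flipE hund (w.es ⟨k - 1 - i.val, h2⟩) := rfl

/-- SAW types are finite in a locally finite graph. -/
lemma saw_finite (hlf : G.LocallyFinite) : ∀ (n : ℕ) (v : G.V), Finite (G.SAW n v) := by
  intro n
  induction n with
  | zero =>
    intro v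
    refine Finite.of_injective (fun _ => (() : Unit)) ?_
    intro w w' _
    refine saw_eq (fun i => ?_) (fun i => i.elim0)
    have : i = 0 := Fin.ext (by omega)
    rw [this, w.hstart, w'.hstart]
  | succ n ih =>
    intro v
    haveI : ∀ w1 : G.SAW n v, Finite {e : G.E // G.src e = w1.vs (Fin.last n)} := fun w1 =>
      Set.Finite.to_subtype (hlf (w1.vs (Fin.last n))).1
    haveI := ih v
    set Φ : G.SAW (n + 1) v → Σ w1 : G.SAW n v, {e : G.E // G.src e = w1.vs (Fin.last n)} :=
      fun w => ⟨(w.sub 0 n (by omega)).reb ((w.congr_vs (by simp)).trans w.hstart),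
        ⟨w.es ⟨n, by omega⟩, (w.hsrc ⟨n, by omega⟩).trans (w.congr_vs (by simp))⟩⟩ with hΦ
    refine Finite.of_injective Φ ?_
    intro w w' h
    have h1 : (Φ w).1 = (Φ w').1 := by rw [h]
    have h2 : (Φ w).2.val = (Φ w').2.val :=
      congrArg (fun p : (Σ w1 : G.SAW n v, {e : G.E // G.src e = w1.vs (Fin.last n)}) =>
        p.2.val) h
    have hvs : ∀ i : Fin (n + 1), w.vs ⟨0 + i.val, by omega⟩ = w'.vs ⟨0 + i.val, by omega⟩ :=
      fun i => congrFun (congrArg SAW.vs h1) i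
    have hes : ∀ i : Fin n, w.es ⟨0 + i.val, by omega⟩ = w'.es ⟨0 + i.val, by omega⟩ :=
      fun i => congrFun (congrArg SAW.es h1) i
    have h2' : w.es ⟨n, by omega⟩ = w'.es ⟨n, by omega⟩ := h2
    refine saw_eq (fun i => ?_) (fun i => ?_)
    · rcases Nat.lt_or_ge i.val (n + 1) with hc | hc
      · have := hvs ⟨i.val, hc⟩
        exact (w.congr_vs (by simp)).symm.trans (this.trans (w'.congr_vs (by simp)))
      · have hie : i.val = n + 1 := by have := i.isLt; omega
        have e1 : w.vs i = G.tgt (w.es ⟨n, by omega⟩) := by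
          refine ((w.htgt ⟨n, by omega⟩).trans (w.congr_vs ?_)).symm
          simp [Fin.val_succ, hie]
        have e2 : w'.vs i = G.tgt (w'.es ⟨n, by omega⟩) := by
          refine ((w'.htgt ⟨n, by omega⟩).trans (w'.congr_vs ?_)).symm
          simp [Fin.val_succ, hie]
        rw [e1, e2, h2']
    · rcases Nat.lt_or_ge i.val n with hc | hc
      · have := hes ⟨i.val, hc⟩
        exact (w.congr_es (by simp)).symm.trans (this.trans (w'.congr_es (by simp)))
      · have hie : i.val = n := by have := i.isLt; omega
        exact (w.congr_es hie).trans (h2'.trans (w'.congr_es hie.symm))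

/-- `sigma` is invariant under automorphisms. -/
lemma sigma_aut (φ : G.Aut) (n : ℕ) (v : G.V) : G.sigma n v = G.sigma n (φ.vmap v) := by
  unfold sigma
  refine Nat.card_eq_of_bijective
    (fun w => ⟨fun i => φ.vmap (w.vs i), fun i => φ.emap (w.es i),
      fun i => by rw [φ.src_eq, w.hsrc], fun i => by rw [φ.tgt_eq, w.htgt],
      congrArg φ.vmap w.hstart, fun i j hij => w.hinj (φ.vmap.injective hij)⟩) ⟨?_, ?_⟩
  · intro w w' h
    have hvs := congrArg SAW.vs h
    have hes := congrArg SAW.es h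
    refine saw_eq (fun i => φ.vmap.injective (congrFun hvs i))
      (fun i => φ.emap.injective (congrFun hes i))
  · intro w'
    refine ⟨⟨fun i => φ.vmap.symm (w'.vs i), fun i => φ.emap.symm (w'.es i),
      fun i => ?_, fun i => ?_, ?_, fun i j hij => w'.hinj (φ.vmap.symm.injective hij)⟩, ?_⟩
    · apply φ.vmap.injective
      rw [Equiv.apply_symm_apply, ← φ.src_eq, Equiv.apply_symm_apply, w'.hsrc]
    · apply φ.vmap.injective
      rw [Equiv.apply_symm_apply, ← φ.tgt_eq, Equiv.apply_symm_apply, w'.htgt]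
    · show φ.vmap.symm (w'.vs 0) = v
      rw [w'.hstart, Equiv.symm_apply_apply]
    · exact saw_eq (fun i => by simp) (fun i => by simp)

/-! ### Recombination -/

lemma saw_eq_of_pieces {G : Dgraph} {n : ℕ} {v : G.V} (k : ℕ) (hk : k ≤ n) {w w' : G.SAW n v}
    (hvs2 : ∀ j : ℕ, (hj2 : j ≤ k) → w.vs ⟨j, by omega⟩ = w'.vs ⟨j, by omega⟩)
    (hvs : ∀ j : ℕ, (hj : k ≤ j) → (hj2 : j ≤ n) → w.vs ⟨j, by omega⟩ = w'.vs ⟨j, by omega⟩)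
    (hes2 : ∀ j : ℕ, (hj2 : j < k) → w.es ⟨j, by omega⟩ = w'.es ⟨j, by omega⟩)
    (hes : ∀ j : ℕ, (hj : k ≤ j) → (hj2 : j < n) → w.es ⟨j, by omega⟩ = w'.es ⟨j, by omega⟩) :
    w = w' := by
  refine saw_eq (fun i => ?_) (fun i => ?_)
  · rcases le_or_gt i.val k with hc | hc
    · have h := hvs2 i.val hc
      exact (w.congr_vs rfl).trans (h.trans (w'.congr_vs rfl))
    · have h := hvs i.val (by omega) (by have := i.isLt; omega)
      exact (w.congr_vs rfl).trans (h.trans (w'.congr_vs rfl))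
  · rcases Nat.lt_or_ge i.val k with hc | hc
    · have h := hes2 i.val hc
      exact (w.congr_es rfl).trans (h.trans (w'.congr_es rfl))
    · have h := hes i.val hc i.isLt
      exact (w.congr_es rfl).trans (h.trans (w'.congr_es rfl))

/-! ### Basic facts about the counts -/

lemma sigma_le_ssigma (n : ℕ) (v : G.V) : (G.sigma n v : ℝ≥0∞) ≤ G.ssigma n :=
  le_iSup (fun u => ((G.sigma n u : ℝ≥0∞))) v

lemma sigmaB_le_ssigmaB (n : ℕ) (v : G.V) : (G.sigmaB n v : ℝ≥0∞) ≤ G.ssigmaB n :=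
  le_iSup (fun u => ((G.sigmaB n u : ℝ≥0∞))) v

lemma sigmaB_le_sigma (hlf : G.LocallyFinite) (n : ℕ) (v : G.V) :
    G.sigmaB n v ≤ G.sigma n v := by
  haveI := G.saw_finite hlf n v
  exact aux_card_le_of_injective Subtype.val Subtype.val_injective

lemma ssigmaB_le_ssigma (hlf : G.LocallyFinite) (n : ℕ) : G.ssigmaB n ≤ G.ssigma n :=
  iSup_mono fun v => Nat.cast_le.mpr (G.sigmaB_le_sigma hlf n v)

lemma ssigma_lt_top (hlf : G.LocallyFinite) (hqt : G.QuasiTransitive) (n : ℕ) :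
    G.ssigma n < ⊤ := by
  obtain ⟨S, hS⟩ := hqt
  refine lt_of_le_of_lt (iSup_le fun v => ?_)
    (ENNReal.natCast_lt_top (S.sup fun s => G.sigma n s))
  obtain ⟨s, hsS, φ, hφ⟩ := hS v
  have : G.sigma n v = G.sigma n s := by rw [G.sigma_aut φ n s, hφ]
  rw [this]
  exact Nat.cast_le.mpr (Finset.le_sup hsS)

/-! ### Backward extendability of sub-walks -/

lemma isBwdExt_sub_take {G : Dgraph} {n : ℕ} {v : G.V} {w : G.SAW n v} (hbw : G.IsBwdExt w)
    (k : ℕ) (hk : 0 + k ≤ n) : G.IsBwdExt (w.sub 0 k hk) := by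
  obtain ⟨vs, es, hinj, hedge, hvs, hes⟩ := hbw
  refine ⟨fun j => vs (j + (n - k)), fun j => es (j + (n - k)), ?_, ?_, ?_, ?_⟩
  · intro x y hxy
    have := hinj hxy
    omega
  · intro j
    exact ⟨(hedge (j + (n - k))).1.trans (congrArg vs (by omega)), (hedge (j + (n - k))).2⟩
  · intro i
    have hi := i.isLt
    have base := hvs ⟨i.val, by omega⟩
    exact (congrArg vs (by omega : k - i.val + (n - k) = n - i.val)).trans
      (base.trans (w.congr_vs (show (i.val : ℕ) = 0 + i.val by omega)))
  · intro i
    have hi := i.isLt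
    have base := hes ⟨i.val, by omega⟩
    exact (congrArg es (by omega : k - 1 - i.val + (n - k) = n - 1 - i.val)).trans
      (base.trans (w.congr_es (show (i.val : ℕ) = 0 + i.val by omega)))

lemma isBwdExt_sub_drop {G : Dgraph} {n : ℕ} {v : G.V} {w : G.SAW n v} {a len : ℕ}
    (hbw : G.IsBwdExt w) (hk : a + len ≤ n) (hlen : a + len = n) :
    G.IsBwdExt (w.sub a len hk) := by
  obtain ⟨vs, es, hinj, hedge, hvs, hes⟩ := hbw
  refine ⟨vs, es, hinj, hedge, ?_, ?_⟩
  · intro i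
    have hi := i.isLt
    have base := hvs ⟨a + i.val, by omega⟩
    exact (congrArg vs (by omega : len - i.val = n - (a + i.val))).trans base
  · intro i
    have hi := i.isLt
    have base := hes ⟨a + i.val, by omega⟩
    exact (congrArg es (by omega : len - 1 - i.val = n - 1 - (a + i.val))).trans base

/-! ### A backward-extendable SAW of every length -/

lemma exists_bwd_saw (hinf : Infinite G.V) (hlf : G.LocallyFinite) (hund : G.Undirected)
    (hsc : G.StronglyConnected) (n : ℕ) : ∃ (v : G.V) (w : G.SAW n v), G.IsBwdExt w := by
  obtain ⟨v0⟩ : Nonempty G.V := inferInstance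
  obtain ⟨r, hr0, hrd, hrs⟩ := G.exists_geodesic_ray hinf hlf hsc v0
  choose re hre1 hre2 using fun k => (hrs k).exists_fwd hund
  have rinj : Function.Injective r := by
    intro x y h
    have hx := hrd x
    rw [h, hrd y] at hx
    exact hx.symm
  refine ⟨r n, ⟨fun i => r (n - i.val), fun i => G.flipE hund (re (n - 1 - i.val)),
    fun i => ?_, fun i => ?_, by simp, fun x y hxy => ?_⟩, ?_⟩
  · have hi := i.isLt
    rw [G.flipE_src hund, hre2]
    refine congrArg r ?_
    simp only [Fin.coe_castSucc]
    omega
  · have hi := i.isLt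
    rw [G.flipE_tgt hund, hre1]
    refine congrArg r ?_
    simp only [Fin.val_succ]
    omega
  · have hx := x.isLt
    have hy := y.isLt
    have := rinj hxy
    exact Fin.ext (by omega)
  · exact ⟨r, fun m => G.flipE hund (re m), rinj,
      fun m => ⟨by rw [G.flipE_src hund, hre2], by rw [G.flipE_tgt hund, hre1]⟩,
      fun i => rfl, fun i => rfl⟩

lemma one_le_ssigmaB (hinf : Infinite G.V) (hlf : G.LocallyFinite) (hund : G.Undirected)
    (hsc : G.StronglyConnected) (n : ℕ) : 1 ≤ G.ssigmaB n := by
  obtain ⟨v, w, hw⟩ := G.exists_bwd_saw hinf hlf hund hsc n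
  refine le_trans ?_ (G.sigmaB_le_ssigmaB n v)
  haveI : Finite {w : G.SAW n v // G.IsBwdExt w} := by
    haveI := G.saw_finite hlf n v
    infer_instance
  haveI : Nonempty {w : G.SAW n v // G.IsBwdExt w} := ⟨⟨w, hw⟩⟩
  have : 0 < G.sigmaB n v := Nat.card_pos
  exact_mod_cast this

/-! ### Submultiplicativity -/

lemma sigma_split (hlf : G.LocallyFinite) (m n : ℕ) (v : G.V) :
    (G.sigma (m + n) v : ℝ≥0∞) ≤ (G.sigma m v : ℝ≥0∞) * G.ssigma n := by
  haveI := G.saw_finite hlf (m + n) v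
  haveI := G.saw_finite hlf m v
  refine aux_card_le_mul_fibers
    (fun w : G.SAW (m + n) v =>
      (w.sub 0 m (by omega)).reb ((w.congr_vs (by simp)).trans w.hstart))
    (G.ssigma n) fun w1 => ?_
  haveI := G.saw_finite hlf n (w1.vs (Fin.last m))
  have base : ∀ p : {w : G.SAW (m + n) v //
      (w.sub 0 m (by omega)).reb ((w.congr_vs (by simp)).trans w.hstart) = w1},
      p.val.vs ⟨m, by omega⟩ = w1.vs (Fin.last m) := by
    intro p
    have h1 : ((p.val.sub 0 m (by omega)).reb
        ((p.val.congr_vs (by simp)).trans p.val.hstart)).vs (Fin.last m)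
        = w1.vs (Fin.last m) := by rw [p.property]
    exact (p.val.congr_vs (show (m : ℕ) = 0 + (Fin.last m).val by simp [Fin.last])).trans h1
  refine le_trans (Nat.cast_le.mpr (aux_card_le_of_injective
    (fun p => (p.val.sub m n (by omega)).reb (base p)) ?_)) (G.sigma_le_ssigma n _)
  intro p p' hpp
  have hdvs : ∀ i : Fin (n + 1), p.val.vs ⟨m + i.val, by omega⟩
      = p'.val.vs ⟨m + i.val, by omega⟩ := fun i => congrFun (congrArg SAW.vs hpp) i
  have hdes : ∀ i : Fin n, p.val.es ⟨m + i.val, by omega⟩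
      = p'.val.es ⟨m + i.val, by omega⟩ := fun i => congrFun (congrArg SAW.es hpp) i
  have htk := p.property.trans p'.property.symm
  have htvs : ∀ i : Fin (m + 1), p.val.vs ⟨0 + i.val, by omega⟩
      = p'.val.vs ⟨0 + i.val, by omega⟩ := fun i => congrFun (congrArg SAW.vs htk) i
  have htes : ∀ i : Fin m, p.val.es ⟨0 + i.val, by omega⟩
      = p'.val.es ⟨0 + i.val, by omega⟩ := fun i => congrFun (congrArg SAW.es htk) i
  refine Subtype.ext (saw_eq_of_pieces m (by omega) ?_ ?_ ?_ ?_)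
  · intro j hj
    exact (p.val.congr_vs (show j = 0 + j by omega)).trans
      ((htvs ⟨j, by omega⟩).trans (p'.val.congr_vs (show 0 + j = j by omega)))
  · intro j hj hj2
    exact (p.val.congr_vs (show j = m + (j - m) by omega)).trans
      ((hdvs ⟨j - m, by omega⟩).trans (p'.val.congr_vs (show m + (j - m) = j by omega)))
  · intro j hj
    exact (p.val.congr_es (show j = 0 + j by omega)).trans
      ((htes ⟨j, by omega⟩).trans (p'.val.congr_es (show 0 + j = j by omega)))
  · intro j hj hj2
    exact (p.val.congr_es (show j = m + (j - m) by omega)).trans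
      ((hdes ⟨j - m, by omega⟩).trans (p'.val.congr_es (show m + (j - m) = j by omega)))

lemma sigmaB_split (hlf : G.LocallyFinite) (m n : ℕ) (v : G.V) :
    (G.sigmaB (m + n) v : ℝ≥0∞) ≤ (G.sigmaB m v : ℝ≥0∞) * G.ssigmaB n := by
  haveI := G.saw_finite hlf (m + n) v
  haveI := G.saw_finite hlf m v
  refine aux_card_le_mul_fibers
    (fun W : {w : G.SAW (m + n) v // G.IsBwdExt w} =>
      (⟨(W.val.sub 0 m (by omega)).reb ((W.val.congr_vs (by simp)).trans W.val.hstart),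
        isBwdExt_sub_take W.property m (by omega)⟩ : {w1 : G.SAW m v // G.IsBwdExt w1}))
    (G.ssigmaB n) fun w1 => ?_
  haveI := G.saw_finite hlf n (w1.val.vs (Fin.last m))
  have base : ∀ p : {W : {w : G.SAW (m + n) v // G.IsBwdExt w} //
      (⟨(W.val.sub 0 m (by omega)).reb ((W.val.congr_vs (by simp)).trans W.val.hstart),
        isBwdExt_sub_take W.property m (by omega)⟩ : {w1 : G.SAW m v // G.IsBwdExt w1}) = w1},
      p.val.val.vs ⟨m, by omega⟩ = w1.val.vs (Fin.last m) := by
    intro p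
    have h0 : ((p.val.val.sub 0 m (by omega)).reb
        ((p.val.val.congr_vs (by simp)).trans p.val.val.hstart)) = w1.val :=
      congrArg Subtype.val p.property
    have h1 : ((p.val.val.sub 0 m (by omega)).reb
        ((p.val.val.congr_vs (by simp)).trans p.val.val.hstart)).vs (Fin.last m)
        = w1.val.vs (Fin.last m) := by rw [h0]
    exact (p.val.val.congr_vs
      (show (m : ℕ) = 0 + (Fin.last m).val by simp [Fin.last])).trans h1
  refine le_trans (Nat.cast_le.mpr (aux_card_le_of_injective
    (fun p => (⟨(p.val.val.sub m n (by omega)).reb (base p),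
      isBwdExt_sub_drop p.val.property (by omega) (by omega)⟩ :
        {w2 : G.SAW n (w1.val.vs (Fin.last m)) // G.IsBwdExt w2})) ?_))
    (G.sigmaB_le_ssigmaB n _)
  intro p p' hpp
  have hpp' : ((p.val.val.sub m n (by omega)).reb (base p) : G.SAW n _)
      = (p'.val.val.sub m n (by omega)).reb (base p') := congrArg Subtype.val hpp
  have hdvs : ∀ i : Fin (n + 1), p.val.val.vs ⟨m + i.val, by omega⟩
      = p'.val.val.vs ⟨m + i.val, by omega⟩ := fun i => congrFun (congrArg SAW.vs hpp') i
  have hdes : ∀ i : Fin n, p.val.val.es ⟨m + i.val, by omega⟩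
      = p'.val.val.es ⟨m + i.val, by omega⟩ := fun i => congrFun (congrArg SAW.es hpp') i
  have htk : ((p.val.val.sub 0 m (by omega)).reb
      ((p.val.val.congr_vs (by simp)).trans p.val.val.hstart))
      = ((p'.val.val.sub 0 m (by omega)).reb
      ((p'.val.val.congr_vs (by simp)).trans p'.val.val.hstart)) :=
    (congrArg Subtype.val p.property).trans (congrArg Subtype.val p'.property).symm
  have htvs : ∀ i : Fin (m + 1), p.val.val.vs ⟨0 + i.val, by omega⟩
      = p'.val.val.vs ⟨0 + i.val, by omega⟩ := fun i => congrFun (congrArg SAW.vs htk) i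
  have htes : ∀ i : Fin m, p.val.val.es ⟨0 + i.val, by omega⟩
      = p'.val.val.es ⟨0 + i.val, by omega⟩ := fun i => congrFun (congrArg SAW.es htk) i
  refine Subtype.ext (Subtype.ext (saw_eq_of_pieces m (by omega) ?_ ?_ ?_ ?_))
  · intro j hj
    exact (p.val.val.congr_vs (show j = 0 + j by omega)).trans
      ((htvs ⟨j, by omega⟩).trans (p'.val.val.congr_vs (show 0 + j = j by omega)))
  · intro j hj hj2
    exact (p.val.val.congr_vs (show j = m + (j - m) by omega)).trans
      ((hdvs ⟨j - m, by omega⟩).trans (p'.val.val.congr_vs (show m + (j - m) = j by omega)))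
  · intro j hj
    exact (p.val.val.congr_es (show j = 0 + j by omega)).trans
      ((htes ⟨j, by omega⟩).trans (p'.val.val.congr_es (show 0 + j = j by omega)))
  · intro j hj hj2
    exact (p.val.val.congr_es (show j = m + (j - m) by omega)).trans
      ((hdes ⟨j - m, by omega⟩).trans (p'.val.val.congr_es (show m + (j - m) = j by omega)))

lemma ssigma_submul (hlf : G.LocallyFinite) (m n : ℕ) :
    G.ssigma (m + n) ≤ G.ssigma m * G.ssigma n :=
  iSup_le fun v => (G.sigma_split hlf m n v).trans
    (mul_le_mul_left (G.sigma_le_ssigma m v) _)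

lemma ssigmaB_submul (hlf : G.LocallyFinite) (m n : ℕ) :
    G.ssigmaB (m + n) ≤ G.ssigmaB m * G.ssigmaB n :=
  iSup_le fun v => (G.sigmaB_split hlf m n v).trans
    (mul_le_mul_left (G.sigmaB_le_ssigmaB m v) _)

/-! ### Decomposition along a geodesic ray -/

lemma flipE_inj (hund : G.Undirected) : Function.Injective (G.flipE hund) := fun a b h => by
  rw [← G.flipE_flipE hund a, h, G.flipE_flipE hund]

lemma saw_udist_le {G : Dgraph} {n : ℕ} {v : G.V} (w : G.SAW n v) (i : Fin (n + 1)) :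
    G.udist v (w.vs i) ≤ i.val := by
  refine NWalk.udist_le ⟨fun j => w.vs ⟨min j i.val, by have := i.isLt; omega⟩, ?_, ?_, ?_⟩
  · exact (w.congr_vs (by simp)).trans w.hstart
  · exact w.congr_vs (by simp)
  · intro a ha
    refine Or.inl ⟨w.es ⟨a, by have := i.isLt; omega⟩, ?_, ?_⟩
    · refine (w.hsrc ⟨a, by have := i.isLt; omega⟩).trans (w.congr_vs ?_)
      simp only [Fin.coe_castSucc]
      omega
    · refine (w.htgt ⟨a, by have := i.isLt; omega⟩).trans (w.congr_vs ?_)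
      simp only [Fin.val_succ]
      omega

lemma isBwdExt_revTake_ray {G : Dgraph} (hund : G.Undirected) {n : ℕ} {v : G.V}
    (w : G.SAW n v) (r : ℕ → G.V) (re : ℕ → G.E)
    (hre1 : ∀ m, G.src (re m) = r m) (hre2 : ∀ m, G.tgt (re m) = r (m + 1))
    (rinj : Function.Injective r) (L k : ℕ) (hk : k ≤ n)
    (hmem : r L = w.vs ⟨k, by omega⟩)
    (hmax : ∀ l, L < l → ∀ i : Fin (n + 1), r l ≠ w.vs i) :
    G.IsBwdExt (w.revTake hund k hk) := by
  classical
  refine ⟨fun m => if h : m ≤ k then w.vs ⟨m, by omega⟩ else r (L + (m - k)),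
    fun m => if h : m < k then G.flipE hund (w.es ⟨m, by omega⟩)
      else G.flipE hund (re (L + (m - k))), ?_, ?_, ?_, ?_⟩
  · intro x y hxy
    dsimp only at hxy
    by_cases hx : x ≤ k <;> by_cases hy : y ≤ k
    · rw [dif_pos hx, dif_pos hy] at hxy
      have := w.hinj hxy
      rw [Fin.mk.injEq] at this
      omega
    · rw [dif_pos hx, dif_neg hy] at hxy
      exact absurd hxy.symm (hmax (L + (y - k)) (by omega) _)
    · rw [dif_neg hx, dif_pos hy] at hxy
      exact absurd hxy (hmax (L + (x - k)) (by omega) _)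
    · rw [dif_neg hx, dif_neg hy] at hxy
      have := rinj hxy
      omega
  · intro m
    dsimp only
    by_cases hm : m < k
    · rw [dif_pos hm, dif_pos (by omega : m + 1 ≤ k), dif_pos (by omega : m ≤ k)]
      constructor
      · rw [G.flipE_src hund, w.htgt]
        refine w.congr_vs ?_
        simp only [Fin.val_succ]
      · rw [G.flipE_tgt hund, w.hsrc]
        exact w.congr_vs (by simp only [Fin.coe_castSucc])
    · rw [dif_neg hm, dif_neg (by omega : ¬ (m + 1 ≤ k))]
      constructor
      · rw [G.flipE_src hund, hre2]
        exact congrArg r (by omega)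
      · rw [G.flipE_tgt hund, hre1]
        by_cases hmk : m ≤ k
        · rw [dif_pos hmk]
          rw [show L + (m - k) = L by omega, hmem]
          exact w.congr_vs (show (k : ℕ) = m by omega)
        · rw [dif_neg hmk]
  · intro i
    have hi := i.isLt
    dsimp only
    rw [dif_pos (by omega : k - i.val ≤ k)]
    exact w.congr_vs rfl
  · intro i
    have hi := i.isLt
    dsimp only
    rw [dif_pos (by omega : k - 1 - i.val < k)]
    rfl

lemma isBwdExt_sub_ray {G : Dgraph} (hund : G.Undirected) {n : ℕ} {v : G.V}
    (w : G.SAW n v) (r : ℕ → G.V) (re : ℕ → G.E)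
    (hre1 : ∀ m, G.src (re m) = r m) (hre2 : ∀ m, G.tgt (re m) = r (m + 1))
    (rinj : Function.Injective r) (L k : ℕ) (hk2 : k + (n - k) ≤ n) (hk : k ≤ n)
    (hmem : r L = w.vs ⟨k, by omega⟩)
    (hmax : ∀ l, L < l → ∀ i : Fin (n + 1), r l ≠ w.vs i) :
    G.IsBwdExt (w.sub k (n - k) hk2) := by
  classical
  refine ⟨fun m => if h : m ≤ n - k then w.vs ⟨n - m, by omega⟩ else r (L + (m - (n - k))),
    fun m => if h : m < n - k then w.es ⟨n - 1 - m, by omega⟩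
      else G.flipE hund (re (L + (m - (n - k)))), ?_, ?_, ?_, ?_⟩
  · intro x y hxy
    dsimp only at hxy
    by_cases hx : x ≤ n - k <;> by_cases hy : y ≤ n - k
    · rw [dif_pos hx, dif_pos hy] at hxy
      have := w.hinj hxy
      rw [Fin.mk.injEq] at this
      omega
    · rw [dif_pos hx, dif_neg hy] at hxy
      exact absurd hxy.symm (hmax (L + (y - (n - k))) (by omega) _)
    · rw [dif_neg hx, dif_pos hy] at hxy
      exact absurd hxy (hmax (L + (x - (n - k))) (by omega) _)
    · rw [dif_neg hx, dif_neg hy] at hxy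
      have := rinj hxy
      omega
  · intro m
    dsimp only
    by_cases hm : m < n - k
    · rw [dif_pos hm, dif_pos (by omega : m + 1 ≤ n - k), dif_pos (by omega : m ≤ n - k)]
      constructor
      · rw [w.hsrc]
        refine w.congr_vs ?_
        simp only [Fin.coe_castSucc]
        omega
      · rw [w.htgt]
        refine w.congr_vs ?_
        simp only [Fin.val_succ]
        omega
    · rw [dif_neg hm, dif_neg (by omega : ¬ (m + 1 ≤ n - k))]
      constructor
      · rw [G.flipE_src hund, hre2]
        exact congrArg r (by omega)
      · rw [G.flipE_tgt hund, hre1]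
        by_cases hmk : m ≤ n - k
        · rw [dif_pos hmk]
          rw [show L + (m - (n - k)) = L by omega, hmem]
          exact w.congr_vs (show (k : ℕ) = n - m by omega)
        · rw [dif_neg hmk]
  · intro i
    have hi := i.isLt
    dsimp only
    rw [dif_pos (by omega : n - k - i.val ≤ n - k)]
    exact w.congr_vs (show n - (n - k - i.val) = k + i.val by omega)
  · intro i
    have hi := i.isLt
    dsimp only
    rw [dif_pos (by omega : n - k - 1 - i.val < n - k)]
    exact w.congr_es (show n - 1 - (n - k - 1 - i.val) = k + i.val by omega)

lemma sigma_le_sum_decomp (hinf : Infinite G.V) (hlf : G.LocallyFinite) (hund : G.Undirected)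
    (hsc : G.StronglyConnected) (n : ℕ) (v : G.V) :
    (G.sigma n v : ℝ≥0∞) ≤
      ∑ p : Fin (n + 1) × Fin (n + 1), G.ssigmaB p.2.val * G.ssigmaB (n - p.2.val) := by
  classical
  obtain ⟨r, hr0, hrd, hrs⟩ := G.exists_geodesic_ray hinf hlf hsc v
  choose re hre1 hre2 using fun m => (hrs m).exists_fwd hund
  have rinj : Function.Injective r := fun x y h => by
    have hx := hrd x
    rw [h, hrd y] at hx
    exact hx.symm
  haveI := G.saw_finite hlf n v
  have hM : ∀ w : G.SAW n v, ∃ i : Fin (n + 1), r 0 = w.vs i :=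
    fun w => ⟨0, hr0.trans w.hstart.symm⟩
  have hMb : ∀ w : G.SAW n v, ∀ l, (∃ i : Fin (n + 1), r l = w.vs i) → l ≤ n := by
    rintro w l ⟨i, hi⟩
    have h1 := saw_udist_le w i
    rw [← hi, hrd l] at h1
    have := i.isLt
    omega
  set L : G.SAW n v → ℕ :=
    fun w => sSup {l : ℕ | ∃ i : Fin (n + 1), r l = w.vs i} with hLdef
  have hLmem : ∀ w, ∃ i : Fin (n + 1), r (L w) = w.vs i :=
    fun w => Nat.sSup_mem ⟨0, hM w⟩ ⟨n, fun l hl => hMb w l hl⟩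
  have hLle : ∀ w, L w ≤ n := fun w => hMb w (L w) (hLmem w)
  have hLmax : ∀ (w : G.SAW n v) l, L w < l → ∀ i : Fin (n + 1), r l ≠ w.vs i := by
    intro w l hl i hmem
    have h2 : l ≤ L w := le_csSup ⟨n, fun x hx => hMb w x hx⟩ (⟨i, hmem⟩ :
      l ∈ {l : ℕ | ∃ i : Fin (n + 1), r l = w.vs i})
    omega
  set J : G.SAW n v → Fin (n + 1) := fun w => Classical.choose (hLmem w) with hJdef
  have hJspec : ∀ w, r (L w) = w.vs (J w) := fun w => Classical.choose_spec (hLmem w)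
  refine aux_card_le_sum_fibers
    (fun w => ((⟨L w, by have := hLle w; omega⟩ : Fin (n + 1)), J w))
    (fun p => G.ssigmaB p.2.val * G.ssigmaB (n - p.2.val)) ?_
  rintro ⟨l, k⟩
  have hkn : k.val ≤ n := by have := k.isLt; omega
  haveI := G.saw_finite hlf k.val (r l.val)
  haveI := G.saw_finite hlf (n - k.val) (r l.val)
  -- facts about fiber members
  have hLw : ∀ p : {w : G.SAW n v //
      (fun w => ((⟨L w, by have := hLle w; omega⟩ : Fin (n + 1)), J w)) w = (l, k)},
      L p.val = l.val := by
    intro p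
    have h1 := congrArg Prod.fst p.property
    exact congrArg Fin.val h1
  have hJw : ∀ p : {w : G.SAW n v //
      (fun w => ((⟨L w, by have := hLle w; omega⟩ : Fin (n + 1)), J w)) w = (l, k)},
      J p.val = k := fun p => congrArg Prod.snd p.property
  have base : ∀ p : {w : G.SAW n v //
      (fun w => ((⟨L w, by have := hLle w; omega⟩ : Fin (n + 1)), J w)) w = (l, k)},
      p.val.vs ⟨k.val, by omega⟩ = r l.val := by
    intro p
    refine (p.val.congr_vs (show (k.val : ℕ) = (J p.val).val by rw [hJw p])).trans ?_
    exact (hJspec p.val).symm.trans (congrArg r (hLw p))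
  have hmemp : ∀ p : {w : G.SAW n v //
      (fun w => ((⟨L w, by have := hLle w; omega⟩ : Fin (n + 1)), J w)) w = (l, k)},
      r l.val = p.val.vs ⟨k.val, by omega⟩ := fun p => (base p).symm
  have hmaxp : ∀ (p : {w : G.SAW n v //
      (fun w => ((⟨L w, by have := hLle w; omega⟩ : Fin (n + 1)), J w)) w = (l, k)})
      l', l.val < l' → ∀ i : Fin (n + 1), r l' ≠ p.val.vs i := by
    intro p l' hl' i
    exact hLmax p.val l' (by rw [hLw p]; omega) i
  refine le_trans (Nat.cast_le.mpr (aux_card_le_of_injective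
    (fun p => ((⟨(p.val.revTake hund k.val hkn).reb (base p),
        isBwdExt_revTake_ray hund p.val r re hre1 hre2 rinj l.val k.val hkn
          (hmemp p) (hmaxp p)⟩ : {P : G.SAW k.val (r l.val) // G.IsBwdExt P}),
      (⟨(p.val.sub k.val (n - k.val) (by omega)).reb (base p),
        isBwdExt_sub_ray hund p.val r re hre1 hre2 rinj l.val k.val (by omega) hkn
          (hmemp p) (hmaxp p)⟩ : {Q : G.SAW (n - k.val) (r l.val) // G.IsBwdExt Q})))
    ?_)) ?_
  · intro p p' hpp
    have hP : ((p.val.revTake hund k.val hkn).reb (base p) : G.SAW k.val (r l.val))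
        = (p'.val.revTake hund k.val hkn).reb (base p') :=
      congrArg Subtype.val (congrArg Prod.fst hpp)
    have hQ : ((p.val.sub k.val (n - k.val) (by omega)).reb (base p) :
        G.SAW (n - k.val) (r l.val))
        = (p'.val.sub k.val (n - k.val) (by omega)).reb (base p') :=
      congrArg Subtype.val (congrArg Prod.snd hpp)
    have hPvs : ∀ i : Fin (k.val + 1), p.val.vs ⟨k.val - i.val, by omega⟩
        = p'.val.vs ⟨k.val - i.val, by omega⟩ := fun i => congrFun (congrArg SAW.vs hP) i
    have hPes : ∀ i : Fin k.val,
        G.flipE hund (p.val.es ⟨k.val - 1 - i.val, by omega⟩)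
        = G.flipE hund (p'.val.es ⟨k.val - 1 - i.val, by omega⟩) :=
      fun i => congrFun (congrArg SAW.es hP) i
    have hQvs : ∀ i : Fin (n - k.val + 1), p.val.vs ⟨k.val + i.val, by omega⟩
        = p'.val.vs ⟨k.val + i.val, by omega⟩ := fun i => congrFun (congrArg SAW.vs hQ) i
    have hQes : ∀ i : Fin (n - k.val), p.val.es ⟨k.val + i.val, by omega⟩
        = p'.val.es ⟨k.val + i.val, by omega⟩ := fun i => congrFun (congrArg SAW.es hQ) i
    refine Subtype.ext (saw_eq_of_pieces k.val hkn ?_ ?_ ?_ ?_)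
    · intro j hj
      refine (p.val.congr_vs (show j = k.val - (k.val - j) by omega)).trans
        (((hPvs ⟨k.val - j, by omega⟩).trans
          (p'.val.congr_vs (show k.val - (k.val - j) = j by omega))))
    · intro j hj hj2
      exact (p.val.congr_vs (show j = k.val + (j - k.val) by omega)).trans
        ((hQvs ⟨j - k.val, by omega⟩).trans
          (p'.val.congr_vs (show k.val + (j - k.val) = j by omega)))
    · intro j hj
      have h3 := G.flipE_inj hund (hPes ⟨k.val - 1 - j, by omega⟩)
      exact (p.val.congr_es (show j = k.val - 1 - (k.val - 1 - j) by omega)).trans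
        (h3.trans (p'.val.congr_es (show k.val - 1 - (k.val - 1 - j) = j by omega)))
    · intro j hj hj2
      exact (p.val.congr_es (show j = k.val + (j - k.val) by omega)).trans
        ((hQes ⟨j - k.val, by omega⟩).trans
          (p'.val.congr_es (show k.val + (j - k.val) = j by omega)))
  · calc ((Nat.card ({P : G.SAW k.val (r l.val) // G.IsBwdExt P}
        × {Q : G.SAW (n - k.val) (r l.val) // G.IsBwdExt Q}) : ℕ) : ℝ≥0∞)
        = (G.sigmaB k.val (r l.val) : ℝ≥0∞) * (G.sigmaB (n - k.val) (r l.val) : ℝ≥0∞) := by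
          rw [Nat.card_prod, Nat.cast_mul]
          rfl
      _ ≤ G.ssigmaB k.val * G.ssigmaB (n - k.val) :=
          mul_le_mul' (G.sigmaB_le_ssigmaB _ _) (G.sigmaB_le_ssigmaB _ _)

lemma ssigma_le_decomp (hinf : Infinite G.V) (hlf : G.LocallyFinite) (hund : G.Undirected)
    (hsc : G.StronglyConnected) (n : ℕ) :
    ∃ k ≤ n, G.ssigma n ≤ ((n + 1) * (n + 1) : ℕ) *
      (G.ssigmaB k * G.ssigmaB (n - k)) := by
  classical
  set F : ℕ → ℝ≥0∞ := fun k => G.ssigmaB k * G.ssigmaB (n - k) with hF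
  obtain ⟨k, hkmem, hkeq⟩ := Finset.exists_mem_eq_sup (Finset.range (n + 1))
    ⟨0, Finset.mem_range.mpr (by omega)⟩ F
  refine ⟨k, Nat.lt_succ_iff.mp (Finset.mem_range.mp hkmem), ?_⟩
  refine iSup_le fun v => le_trans (G.sigma_le_sum_decomp hinf hlf hund hsc n v) ?_
  calc (∑ p : Fin (n + 1) × Fin (n + 1), G.ssigmaB p.2.val * G.ssigmaB (n - p.2.val))
      ≤ (Finset.univ : Finset (Fin (n + 1) × Fin (n + 1))).card •
        ((Finset.range (n + 1)).sup F) := by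
        refine Finset.sum_le_card_nsmul _ _ _ fun p _ => ?_
        exact Finset.le_sup (f := F) (Finset.mem_range.mpr p.2.isLt)
    _ = ((n + 1) * (n + 1) : ℕ) * (G.ssigmaB k * G.ssigmaB (n - k)) := by
        rw [hkeq, nsmul_eq_mul]
        congr 1
        simp [Finset.card_univ]

end Dgraph

open Filter ENNReal

/-- for an infinite, locally finite, connected, undirected,
quasi-transitive graph, `μ = μ^B`. -/
theorem mu_eq_muB_undirected (G : Dgraph) (hinf : Infinite G.V) (hlf : G.LocallyFinite)
    (hund : G.Undirected) (hsc : G.StronglyConnected) (hqt : G.QuasiTransitive) :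
    ∃ μ μB : ℝ≥0∞,
      Tendsto (fun n : ℕ => (G.ssigma n) ^ (1 / (n : ℝ))) atTop (nhds μ) ∧
      Tendsto (fun n : ℕ => (G.ssigmaB n) ^ (1 / (n : ℝ))) atTop (nhds μB) ∧
      μ = μB := by
  classical
  have hb1 : ∀ n, 1 ≤ G.ssigmaB n := G.one_le_ssigmaB hinf hlf hund hsc
  have hba : ∀ n, G.ssigmaB n ≤ G.ssigma n := G.ssigmaB_le_ssigma hlf
  have hatop : ∀ n, G.ssigma n ≠ ⊤ := fun n => (G.ssigma_lt_top hlf hqt n).ne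
  have hbtop : ∀ n, G.ssigmaB n ≠ ⊤ :=
    fun n => ((hba n).trans_lt (G.ssigma_lt_top hlf hqt n)).ne
  have ha1 : ∀ n, 1 ≤ G.ssigma n := fun n => (hb1 n).trans (hba n)
  set u : ℕ → ℝ := fun n => Real.log (G.ssigma n).toReal with hudef
  set w : ℕ → ℝ := fun n => Real.log (G.ssigmaB n).toReal with hwdef
  have hueq : ∀ n, u n = Real.log (G.ssigma n).toReal := fun n => rfl
  have hweq : ∀ n, w n = Real.log (G.ssigmaB n).toReal := fun n => rfl
  have hat : ∀ n, 1 ≤ (G.ssigma n).toReal := fun n => by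
    have := ENNReal.toReal_mono (hatop n) (ha1 n)
    simpa using this
  have hbt : ∀ n, 1 ≤ (G.ssigmaB n).toReal := fun n => by
    have := ENNReal.toReal_mono (hbtop n) (hb1 n)
    simpa using this
  have hu0 : ∀ n, 0 ≤ u n := fun n => Real.log_nonneg (hat n)
  have hw0 : ∀ n, 0 ≤ w n := fun n => Real.log_nonneg (hbt n)
  have hwu : ∀ n, w n ≤ u n := fun n =>
    Real.log_le_log (by linarith [hbt n]) (ENNReal.toReal_mono (hatop n) (hba n))
  have hdivmono : ∀ (x y : ℝ) (n : ℕ), x ≤ y → x / (n : ℝ) ≤ y / (n : ℝ) := by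
    intro x y n h
    rcases Nat.eq_zero_or_pos n with h0 | h0
    · simp [h0]
    · have : (0:ℝ) < n := by exact_mod_cast h0
      exact (div_le_div_iff_of_pos_right this).mpr h
  have husub : Subadditive u := by
    intro m n
    have h1 : (G.ssigma (m + n)).toReal ≤ ((G.ssigma m) * (G.ssigma n)).toReal :=
      ENNReal.toReal_mono (ENNReal.mul_ne_top (hatop m) (hatop n)) (G.ssigma_submul hlf m n)
    rw [ENNReal.toReal_mul] at h1
    calc u (m + n) ≤ Real.log ((G.ssigma m).toReal * (G.ssigma n).toReal) :=
          Real.log_le_log (by linarith [hat (m + n)]) h1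
      _ = u m + u n :=
          Real.log_mul (by linarith [hat m]) (by linarith [hat n])
  have hwsub : Subadditive w := by
    intro m n
    have h1 : (G.ssigmaB (m + n)).toReal ≤ ((G.ssigmaB m) * (G.ssigmaB n)).toReal :=
      ENNReal.toReal_mono (ENNReal.mul_ne_top (hbtop m) (hbtop n)) (G.ssigmaB_submul hlf m n)
    rw [ENNReal.toReal_mul] at h1
    calc w (m + n) ≤ Real.log ((G.ssigmaB m).toReal * (G.ssigmaB n).toReal) :=
          Real.log_le_log (by linarith [hbt (m + n)]) h1
      _ = w m + w n :=
          Real.log_mul (by linarith [hbt m]) (by linarith [hbt n])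
  have hubdd : BddBelow (Set.range fun n : ℕ => u n / n) := by
    refine ⟨0, ?_⟩
    rintro x ⟨n, rfl⟩
    exact div_nonneg (hu0 n) (Nat.cast_nonneg n)
  have hwbdd : BddBelow (Set.range fun n : ℕ => w n / n) := by
    refine ⟨0, ?_⟩
    rintro x ⟨n, rfl⟩
    exact div_nonneg (hw0 n) (Nat.cast_nonneg n)
  have hulim := husub.tendsto_lim hubdd
  have hwlim := hwsub.tendsto_lim hwbdd
  have hLwu : hwsub.lim ≤ husub.lim :=
    le_of_tendsto_of_tendsto' hwlim hulim fun n => hdivmono _ _ n (hwu n)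
  have hLw0 : 0 ≤ hwsub.lim :=
    le_of_tendsto_of_tendsto' tendsto_const_nhds hwlim
      fun n => div_nonneg (hw0 n) (Nat.cast_nonneg n)
  -- limits used for the hard direction
  have t1 : Tendsto (fun n : ℕ => Real.log ((n : ℝ) + 1) / ((n : ℝ) + 1)) atTop (nhds 0) :=
    (Real.isLittleO_log_id_atTop.tendsto_div_nhds_zero).comp
      (tendsto_atTop_add_const_right atTop 1 tendsto_natCast_atTop_atTop)
  have t2 : Tendsto (fun n : ℕ => ((n : ℝ) + 1) / (n : ℝ)) atTop (nhds 1) := by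
    have h12 : (fun n : ℕ => (1 : ℝ) + 1 / (n : ℝ)) =ᶠ[atTop]
        fun n : ℕ => ((n : ℝ) + 1) / (n : ℝ) := by
      filter_upwards [eventually_ge_atTop 1] with n hn
      have hne : ((n : ℝ)) ≠ 0 := Nat.cast_ne_zero.mpr (by omega)
      field_simp
    refine Tendsto.congr' h12 ?_
    simpa using (tendsto_const_nhds : Tendsto (fun _ : ℕ => (1 : ℝ)) atTop (nhds 1)).add tendsto_one_div_atTop_nhds_zero_nat
  have t3 : Tendsto (fun n : ℕ => Real.log ((n : ℝ) + 1) / (n : ℝ)) atTop (nhds 0) := by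
    have hmul := t1.mul t2
    rw [zero_mul] at hmul
    refine Tendsto.congr' ?_ hmul
    filter_upwards [eventually_ge_atTop 1] with n hn
    have hne : ((n : ℝ)) ≠ 0 := Nat.cast_ne_zero.mpr (by omega)
    have hne1 : ((n : ℝ)) + 1 ≠ 0 := by positivity
    field_simp
  have hmain : husub.lim ≤ hwsub.lim := by
    by_contra hcon
    push_neg at hcon
    set ε := (husub.lim - hwsub.lim) / 2 with hεdef
    have hε : 0 < ε := by
      rw [hεdef]
      linarith
    have hev : ∀ᶠ k in atTop, w k / k < hwsub.lim + ε :=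
      hwlim.eventually (gt_mem_nhds (by linarith))
    obtain ⟨K, hK⟩ := Filter.eventually_atTop.mp hev
    set C := ∑ j ∈ Finset.range (K + 1), w j with hCdef
    have hCn : ∀ j ≤ K, w j ≤ C := by
      intro j hj
      exact Finset.single_le_sum (fun i _ => hw0 i) (Finset.mem_range.mpr (by omega))
    have hC0 : 0 ≤ C := Finset.sum_nonneg fun i _ => hw0 i
    have hkey : ∀ j : ℕ, w j ≤ C + (hwsub.lim + ε) * j := by
      intro j
      rcases le_or_gt j K with hj | hj
      · have h2 := hCn j hj
        have hnn : 0 ≤ (hwsub.lim + ε) * j :=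
          mul_nonneg (by linarith) (Nat.cast_nonneg j)
        linarith
      · have h2 := hK j (by omega)
        have hjpos : (0 : ℝ) < j := Nat.cast_pos.mpr (by omega)
        rw [div_lt_iff₀ hjpos] at h2
        linarith
    have hun : ∀ n : ℕ, u n ≤ Real.log ((((n + 1) * (n + 1) : ℕ) : ℝ)) + 2 * C
        + (hwsub.lim + ε) * n := by
      intro n
      obtain ⟨k, hkn, hdec⟩ := G.ssigma_le_decomp hinf hlf hund hsc n
      have hRne : ((((n + 1) * (n + 1) : ℕ) : ℝ≥0∞)) * (G.ssigmaB k * G.ssigmaB (n - k)) ≠ ⊤ :=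
        ENNReal.mul_ne_top (ENNReal.natCast_ne_top _)
          (ENNReal.mul_ne_top (hbtop k) (hbtop (n - k)))
      have h1 := ENNReal.toReal_mono hRne hdec
      rw [ENNReal.toReal_mul, ENNReal.toReal_mul, ENNReal.toReal_natCast] at h1
      have hXpos : (0 : ℝ) < (((n + 1) * (n + 1) : ℕ) : ℝ) := by positivity
      have hlog := Real.log_le_log (by linarith [hat n]) h1
      rw [Real.log_mul (by positivity) (by nlinarith [hbt k, hbt (n - k)]),
        Real.log_mul (by linarith [hbt k]) (by linarith [hbt (n - k)])] at hlog
      have e1 := hkey k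
      have e2 := hkey (n - k)
      have hsum : ((k : ℝ)) + ((n - k : ℕ) : ℝ) = (n : ℝ) := by
        rw [Nat.cast_sub hkn]
        ring
      have hw1 := hweq k
      have hw2 := hweq (n - k)
      nlinarith [hlog, e1, e2]
    have hconv : Tendsto (fun n : ℕ =>
        (Real.log ((((n + 1) * (n + 1) : ℕ) : ℝ)) + 2 * C) / n + (hwsub.lim + ε))
        atTop (nhds (0 + (hwsub.lim + ε))) := by
      refine Tendsto.add ?_ tendsto_const_nhds
      have hmix := (t3.const_mul 2).add (tendsto_const_div_atTop_nhds_zero_nat (2 * C))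
      rw [mul_zero, add_zero] at hmix
      refine Tendsto.congr' ?_ hmix
      refine Filter.Eventually.of_forall fun n => ?_
      have hln : Real.log ((((n + 1) * (n + 1) : ℕ) : ℝ)) = 2 * Real.log ((n : ℝ) + 1) := by
        push_cast
        rw [Real.log_mul (by positivity) (by positivity)]
        ring
      dsimp only
      rw [hln]
      ring
    rw [zero_add] at hconv
    have hfinal : husub.lim ≤ hwsub.lim + ε := by
      refine le_of_tendsto_of_tendsto hulim hconv ?_
      filter_upwards [eventually_ge_atTop 1] with n hn
      have hnpos : (0 : ℝ) < n := Nat.cast_pos.mpr (by omega)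
      have h5 := hun n
      have hmulout : ((Real.log ((((n + 1) * (n + 1) : ℕ) : ℝ)) + 2 * C) / n
          + (hwsub.lim + ε)) * n
          = Real.log ((((n + 1) * (n + 1) : ℕ) : ℝ)) + 2 * C + (hwsub.lim + ε) * n := by
        field_simp
      show u n / (n : ℝ) ≤ _
      rw [div_le_iff₀ hnpos, hmulout]
      linarith
    rw [hεdef] at hfinal
    linarith
  have hlimeq : husub.lim = hwsub.lim := le_antisymm hmain hLwu
  have convgen : ∀ (c : ℕ → ℝ≥0∞) (x : ℕ → ℝ) (Lm : ℝ), (∀ n, 1 ≤ (c n).toReal) →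
      (∀ n, c n ≠ ⊤) → (∀ n, x n = Real.log (c n).toReal) →
      Tendsto (fun n => x n / n) atTop (nhds Lm) →
      Tendsto (fun n : ℕ => c n ^ (1 / (n : ℝ))) atTop
        (nhds (ENNReal.ofReal (Real.exp Lm))) := by
    intro c x Lm h1 h2 h3 h4
    have base : Tendsto (fun n : ℕ => ENNReal.ofReal (Real.exp (x n / n))) atTop
        (nhds (ENNReal.ofReal (Real.exp Lm))) :=
      (ENNReal.continuous_ofReal.tendsto _).comp ((Real.continuous_exp.tendsto _).comp h4)
    refine Tendsto.congr' ?_ base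
    refine Filter.Eventually.of_forall fun n => ?_
    have hpos : 0 < (c n).toReal := by linarith [h1 n]
    have hcn : c n = ENNReal.ofReal ((c n).toReal) := (ENNReal.ofReal_toReal (h2 n)).symm
    dsimp only
    rw [hcn, ENNReal.ofReal_rpow_of_pos hpos]
    congr 1
    rw [Real.rpow_def_of_pos hpos, mul_one_div, ← h3 n]
  refine ⟨ENNReal.ofReal (Real.exp husub.lim), ENNReal.ofReal (Real.exp hwsub.lim),
    convgen G.ssigma u husub.lim hat hatop hueq hulim,
    convgen G.ssigmaB w hwsub.lim hbt hbtop hweq hwlim,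
    by rw [hlimeq]⟩
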